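/- Let f be L-smooth with infimum f⋆, and suppose the averaged stochastic gradient g_t = (1/n)∑_i g^i(x_t) is unbiased with E‖g_t − ∇f(x_t)‖² ≤ σ²/n. Define the virtual iterates x̃_{t+1} = x̃_t − γ g_t, and suppose x_t − x̃_t = (γ/n)∑_i e_t^i. If γ ≤ 1/(4L), then F̃_{t+1} ≤ F̃_t − (γ/4)E‖∇f(x_t)‖² + (γ³L²/2)E_t + γ²Lσ²/(2n), where F̃_t = E[f(x̃_t)] − f⋆ and E_t = (1/n)∑_i E‖e_t^i‖². -/

import Mathlib

open MeasureTheory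
open scoped RealInnerProductSpace

set_option maxHeartbeats 1000000 in
lemma descent_aux {d : ℕ} {L : ℝ} (hL : 0 ≤ L)
    (f : EuclideanSpace ℝ (Fin d) → ℝ)
    (f' : EuclideanSpace ℝ (Fin d) → EuclideanSpace ℝ (Fin d))
    (hgrad : ∀ z, HasGradientAt f (f' z) z)
    (hlip : ∀ z w, ‖f' w - f' z‖ ≤ L * ‖w - z‖)
    (a b : EuclideanSpace ℝ (Fin d)) :
    f b ≤ f a + ⟪f' a, b - a⟫ + L / 2 * ‖b - a‖ ^ 2 := by
  set v := b - a with hv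
  have hcont : Continuous f' := by
    have : LipschitzWith L.toNNReal f' := by
      apply LipschitzWith.of_dist_le_mul
      intro p q
      simpa [dist_eq_norm, Real.coe_toNNReal _ hL] using hlip q p
    exact this.continuous
  have hderiv : ∀ t : ℝ, HasDerivAt (fun t : ℝ => f (a + t • v))
      (⟪f' (a + t • v), v⟫) t := by
    intro t
    have hpath : HasDerivAt (fun t : ℝ => a + t • v) v t := by
      simpa using ((hasDerivAt_id t).smul_const v).const_add a
    have := ((hgrad (a + t • v)).hasFDerivAt).comp_hasDerivAt t hpath
    simp at this
    exact this
  have hic : Continuous fun t : ℝ => ⟪f' (a + t • v), v⟫ := by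
    exact (hcont.comp (by continuity)).inner continuous_const
  have hftc : ∫ t in (0:ℝ)..1, ⟪f' (a + t • v), v⟫ = f b - f a := by
    rw [intervalIntegral.integral_eq_sub_of_hasDerivAt
      (fun t _ => hderiv t) (hic.intervalIntegrable 0 1)]
    simp [hv]
  have hbc : Continuous fun t : ℝ => ⟪f' a, v⟫ + L * ‖v‖ ^ 2 * t := by fun_prop
  have hmono : ∫ t in (0:ℝ)..1, ⟪f' (a + t • v), v⟫ ≤
      ∫ t in (0:ℝ)..1, (⟪f' a, v⟫ + L * ‖v‖ ^ 2 * t) := by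
    apply intervalIntegral.integral_mono_on (by norm_num)
      (hic.intervalIntegrable 0 1) (hbc.intervalIntegrable 0 1)
    intro t ht
    have h1 : ⟪f' (a + t • v) - f' a, v⟫ ≤ ‖f' (a + t • v) - f' a‖ * ‖v‖ :=
      real_inner_le_norm _ _
    have h2 : ‖f' (a + t • v) - f' a‖ ≤ L * (t * ‖v‖) := by
      have := hlip a (a + t • v)
      simpa [norm_smul, abs_of_nonneg ht.1] using this
    have h3 : ⟪f' (a + t • v), v⟫ = ⟪f' a, v⟫ + ⟪f' (a + t • v) - f' a, v⟫ := by
      rw [inner_sub_left]; ring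
    nlinarith [norm_nonneg v, norm_nonneg (f' (a + t • v) - f' a), ht.1]
  have hrhs : ∫ t in (0:ℝ)..1, (⟪f' a, v⟫ + L * ‖v‖ ^ 2 * t) =
      ⟪f' a, v⟫ + L / 2 * ‖v‖ ^ 2 := by
    have hc2 : Continuous fun t : ℝ => L * ‖v‖ ^ 2 * t := by fun_prop
    rw [intervalIntegral.integral_add (intervalIntegrable_const)
      (hc2.intervalIntegrable 0 1), intervalIntegral.integral_const,
      intervalIntegral.integral_const_mul, integral_id]
    norm_num
    ring
  have := hftc ▸ hmono
  rw [hrhs] at this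
  linarith

set_option maxHeartbeats 1000000 in
theorem virtual_iterate_descent_lemma
    {d n : ℕ} {Ω : Type*} [MeasurableSpace Ω] (μ : Measure Ω) [IsProbabilityMeasure μ]
    (hn : 0 < n) (γ L σ fstar : ℝ) (hL : 0 < L) (hσ : 0 ≤ σ)
    (hγ0 : 0 < γ) (hγ : γ ≤ 1 / (4 * L))
    (f : EuclideanSpace ℝ (Fin d) → ℝ)
    (f' : EuclideanSpace ℝ (Fin d) → EuclideanSpace ℝ (Fin d))
    (hgrad : ∀ z, HasGradientAt f (f' z) z)
    (hlip : ∀ z w, ‖f' w - f' z‖ ≤ L * ‖w - z‖)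
    (hbelow : ∀ z, fstar ≤ f z)
    (x xt : EuclideanSpace ℝ (Fin d)) (e : Fin n → EuclideanSpace ℝ (Fin d))
    (hlink : x - xt = (γ / n) • ∑ i, e i)
    (g : Ω → EuclideanSpace ℝ (Fin d))
    (hintg : Integrable g μ) (hintg2 : Integrable (fun ω => ‖g ω‖ ^ 2) μ)
    (hunbias : ∫ ω, g ω ∂μ = f' x)
    (hvar : ∫ ω, ‖g ω - f' x‖ ^ 2 ∂μ ≤ σ ^ 2 / n)
    (xt' : Ω → EuclideanSpace ℝ (Fin d))
    (hxt' : ∀ ω, xt' ω = xt - γ • g ω) :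
    (∫ ω, f (xt' ω) ∂μ) - fstar ≤
      (f xt - fstar) - (γ / 4) * ‖f' x‖ ^ 2
        + (γ ^ 3 * L ^ 2 / 2) * ((n : ℝ)⁻¹ * ∑ i, ‖e i‖ ^ 2)
        + γ ^ 2 * L * σ ^ 2 / (2 * n) := by
  have hnR : (0:ℝ) < n := by exact_mod_cast hn
  set m := f' x with hm
  set G := f' xt with hG
  set h : Ω → ℝ := fun ω => f xt - γ * ⟪G, g ω⟫ + L / 2 * γ ^ 2 * ‖g ω‖ ^ 2 with hh
  -- pointwise bound
  have hpt : ∀ ω, f (xt' ω) ≤ h ω := by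
    intro ω
    have hd := descent_aux hL.le f f' hgrad hlip xt (xt' ω)
    have h1 : xt' ω - xt = -(γ • g ω) := by rw [hxt' ω]; abel
    rw [h1] at hd
    have h2 : ⟪G, -(γ • g ω)⟫ = -(γ * ⟪G, g ω⟫) := by
      rw [inner_neg_right, real_inner_smul_right]
    have h3 : ‖-(γ • g ω)‖ ^ 2 = γ ^ 2 * ‖g ω‖ ^ 2 := by
      rw [norm_neg, norm_smul]
      simp [abs_of_nonneg hγ0.le, mul_pow]
    rw [h2, h3] at hd
    simp only [hh]
    linarith
  -- integrability
  have hinner : Integrable (fun ω => ⟪G, g ω⟫) μ := hintg.const_inner G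
  have hInth : Integrable h μ := by
    exact ((integrable_const _).sub (hinner.const_mul γ)).add (hintg2.const_mul _)
  have hfcont : Continuous f := by
    have : Differentiable ℝ f := fun z => (hgrad z).differentiableAt
    exact this.continuous
  have hxm : AEStronglyMeasurable (fun ω => f (xt' ω)) μ := by
    have h1 : AEStronglyMeasurable xt' μ := by
      have : xt' = fun ω => xt - γ • g ω := funext hxt'
      rw [this]
      exact aestronglyMeasurable_const.sub (hintg.1.const_smul γ)
    exact hfcont.comp_aestronglyMeasurable h1
  have hIntf : Integrable (fun ω => f (xt' ω)) μ := by
    apply Integrable.mono' ((integrable_const |fstar|).add hInth.abs) hxm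
    filter_upwards with ω
    have h1 := hbelow (xt' ω)
    have h2 := hpt ω
    simp only [Pi.add_apply, Real.norm_eq_abs]
    rw [abs_le]
    constructor
    · have ha1 := neg_abs_le fstar
      have ha2 := abs_nonneg (h ω)
      linarith
    · have ha1 := le_abs_self (h ω)
      have ha2 := abs_nonneg fstar
      linarith
  have hIle : ∫ ω, f (xt' ω) ∂μ ≤ ∫ ω, h ω ∂μ :=
    integral_mono hIntf hInth hpt
  -- compute ∫ h
  have hIh : ∫ ω, h ω ∂μ = f xt - γ * ⟪G, m⟫ + L / 2 * γ ^ 2 * ∫ ω, ‖g ω‖ ^ 2 ∂μ := by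
    have e1 : ∫ ω, h ω ∂μ = (∫ ω, (f xt - γ * ⟪G, g ω⟫) ∂μ)
        + ∫ ω, L / 2 * γ ^ 2 * ‖g ω‖ ^ 2 ∂μ :=
      integral_add ((integrable_const _).sub (hinner.const_mul γ)) (hintg2.const_mul _)
    have e2 : ∫ ω, (f xt - γ * ⟪G, g ω⟫) ∂μ =
        (∫ _ω : Ω, f xt ∂μ) - ∫ ω, γ * ⟪G, g ω⟫ ∂μ :=
      integral_sub (integrable_const _) (hinner.const_mul γ)
    have e3 : ∫ ω, γ * ⟪G, g ω⟫ ∂μ = γ * ∫ ω, ⟪G, g ω⟫ ∂μ := integral_const_mul γ _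
    have e4 : ∫ ω, ⟪G, g ω⟫ ∂μ = ⟪G, m⟫ := by rw [integral_inner hintg, hunbias]
    have e5 : ∫ ω, L / 2 * γ ^ 2 * ‖g ω‖ ^ 2 ∂μ = L / 2 * γ ^ 2 * ∫ ω, ‖g ω‖ ^ 2 ∂μ :=
      integral_const_mul _ _
    rw [e1, e2, e3, e4, e5, integral_const]
    simp
  -- second moment bound
  have hIntgm2 : Integrable (fun ω => ‖g ω - m‖ ^ 2) μ := by
    have heq : (fun ω => ‖g ω - m‖ ^ 2) =
        fun ω => ‖g ω‖ ^ 2 - 2 * ⟪g ω, m⟫ + ‖m‖ ^ 2 := by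
      funext ω
      rw [norm_sub_sq_real]
    rw [heq]
    exact ((hintg2.sub ((hintg.inner_const m).const_mul 2)).add (integrable_const _))
  have hsecond : ∫ ω, ‖g ω‖ ^ 2 ∂μ ≤ σ ^ 2 / n + ‖m‖ ^ 2 := by
    have hzero : ∫ ω, ⟪m, g ω - m⟫ ∂μ = 0 := by
      have t1 : ∫ ω, ⟪m, g ω - m⟫ ∂μ = ⟪m, ∫ ω, (g ω - m) ∂μ⟫ :=
        integral_inner (hintg.sub (integrable_const m)) m
      have t2 : ∫ ω, (g ω - m) ∂μ = (∫ ω, g ω ∂μ) - ∫ _ω : Ω, m ∂μ :=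
        integral_sub hintg (integrable_const m)
      rw [t1, t2, integral_const, hunbias]
      simp
    have hexp : ∀ ω, ‖g ω‖ ^ 2 = ‖g ω - m‖ ^ 2 + 2 * ⟪m, g ω - m⟫ + ‖m‖ ^ 2 := by
      intro ω
      have hgw : g ω = (g ω - m) + m := by abel
      nth_rewrite 1 [hgw]
      rw [norm_add_sq_real, real_inner_comm]
    have i1 : Integrable (fun ω => 2 * ⟪m, g ω - m⟫) μ :=
      ((hintg.sub (integrable_const m)).const_inner m).const_mul 2
    have t5 : ∫ ω, ‖g ω‖ ^ 2 ∂μ =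
        ∫ ω, (‖g ω - m‖ ^ 2 + 2 * ⟪m, g ω - m⟫ + ‖m‖ ^ 2) ∂μ :=
      integral_congr_ae (Filter.Eventually.of_forall fun ω => hexp ω)
    have t4 : ∫ ω, (‖g ω - m‖ ^ 2 + 2 * ⟪m, g ω - m⟫ + ‖m‖ ^ 2) ∂μ =
        (∫ ω, (‖g ω - m‖ ^ 2 + 2 * ⟪m, g ω - m⟫) ∂μ) + ∫ _ω : Ω, ‖m‖ ^ 2 ∂μ :=
      integral_add (hIntgm2.add i1) (integrable_const _)
    have t3 : ∫ ω, (‖g ω - m‖ ^ 2 + 2 * ⟪m, g ω - m⟫) ∂μ =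
        (∫ ω, ‖g ω - m‖ ^ 2 ∂μ) + ∫ ω, 2 * ⟪m, g ω - m⟫ ∂μ :=
      integral_add hIntgm2 i1
    have t6 : ∫ ω, 2 * ⟪m, g ω - m⟫ ∂μ = 2 * ∫ ω, ⟪m, g ω - m⟫ ∂μ := integral_const_mul 2 _
    rw [t5, t4, t3, t6, hzero, integral_const]
    simp only [measure_univ, probReal_univ, ENNReal.toReal_one, one_smul, mul_zero, add_zero]
    linarith [hvar]
  -- gradient difference bound
  have hmG : ‖m - G‖ ^ 2 ≤ L ^ 2 * γ ^ 2 * ((n : ℝ)⁻¹ * ∑ i, ‖e i‖ ^ 2) := by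
    have h1 : ‖m - G‖ ≤ L * ‖x - xt‖ := hlip xt x
    have h2 : ‖x - xt‖ = (γ / n) * ‖∑ i, e i‖ := by
      rw [hlink, norm_smul, Real.norm_eq_abs, abs_of_nonneg (by positivity)]
    have h3 : ‖∑ i, e i‖ ≤ ∑ i, ‖e i‖ := norm_sum_le _ _
    have h4 : (∑ i, ‖e i‖) ^ 2 ≤ (n : ℝ) * ∑ i, ‖e i‖ ^ 2 := by
      have := sq_sum_le_card_mul_sum_sq (s := Finset.univ) (f := fun i => ‖e i‖)
      simpa using this
    have h5 : 0 ≤ ∑ i, ‖e i‖ := Finset.sum_nonneg fun i _ => norm_nonneg _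
    have h6 : ‖m - G‖ ^ 2 ≤ (L * (γ / n)) ^ 2 * (∑ i, ‖e i‖) ^ 2 := by
      have h7 : ‖m - G‖ ≤ L * (γ / n) * ∑ i, ‖e i‖ := by
        calc ‖m - G‖ ≤ L * ((γ / n) * ‖∑ i, e i‖) := by rw [← h2]; exact h1
        _ ≤ L * (γ / n) * ∑ i, ‖e i‖ := by
            rw [mul_assoc]
            apply mul_le_mul_of_nonneg_left _ hL.le
            exact mul_le_mul_of_nonneg_left h3 (by positivity)
      nlinarith [norm_nonneg (m - G)]
    calc ‖m - G‖ ^ 2 ≤ (L * (γ / n)) ^ 2 * (∑ i, ‖e i‖) ^ 2 := h6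
      _ ≤ (L * (γ / n)) ^ 2 * ((n : ℝ) * ∑ i, ‖e i‖ ^ 2) := by
          apply mul_le_mul_of_nonneg_left h4 (by positivity)
      _ = L ^ 2 * γ ^ 2 * ((n : ℝ)⁻¹ * ∑ i, ‖e i‖ ^ 2) := by
          field_simp
  -- inner product bound
  have hGm : -⟪G, m⟫ ≤ -(1/2) * ‖m‖ ^ 2 + (1/2) * ‖m - G‖ ^ 2 := by
    have h1 : ⟪m - G, m⟫ = ‖m‖ ^ 2 - ⟪G, m⟫ := by
      rw [inner_sub_left, real_inner_self_eq_norm_sq]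
    have h2 : ⟪m - G, m⟫ ≤ ‖m - G‖ * ‖m‖ := real_inner_le_norm _ _
    nlinarith [norm_nonneg (m - G), norm_nonneg m, sq_nonneg (‖m - G‖ - ‖m‖)]
  have hLγ : L * γ ≤ 1 / 4 := by
    have h4L : 0 < 4 * L := by linarith
    calc L * γ ≤ L * (1 / (4 * L)) := mul_le_mul_of_nonneg_left hγ hL.le
      _ = 1 / 4 := by field_simp
  -- combine
  have hS : 0 ≤ (n : ℝ)⁻¹ * ∑ i, ‖e i‖ ^ 2 := by positivity
  have key : ∫ ω, h ω ∂μ ≤ f xt - γ * ⟪G, m⟫ + L / 2 * γ ^ 2 * (σ ^ 2 / n + ‖m‖ ^ 2) := by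
    rw [hIh]
    have hc : 0 ≤ L / 2 * γ ^ 2 := by positivity
    have := mul_le_mul_of_nonneg_left hsecond hc
    linarith
  have hfin : f xt - γ * ⟪G, m⟫ + L / 2 * γ ^ 2 * (σ ^ 2 / n + ‖m‖ ^ 2) ≤
      f xt - γ / 4 * ‖m‖ ^ 2 + γ ^ 3 * L ^ 2 / 2 * ((n : ℝ)⁻¹ * ∑ i, ‖e i‖ ^ 2)
        + γ ^ 2 * L * σ ^ 2 / (2 * n) := by
    have hA : 0 ≤ ‖m‖ ^ 2 := sq_nonneg _
    have h1 : -(γ * ⟪G, m⟫) ≤ γ * (-(1/2) * ‖m‖ ^ 2 + (1/2) * ‖m - G‖ ^ 2) := by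
      have := mul_le_mul_of_nonneg_left hGm hγ0.le
      linarith [this]
    have h2 : γ * ((1/2) * ‖m - G‖ ^ 2) ≤
        γ * ((1/2) * (L ^ 2 * γ ^ 2 * ((n : ℝ)⁻¹ * ∑ i, ‖e i‖ ^ 2))) := by
      apply mul_le_mul_of_nonneg_left _ hγ0.le
      linarith
    have h3 : L / 2 * γ ^ 2 * ‖m‖ ^ 2 ≤ γ / 8 * ‖m‖ ^ 2 := by
      have := mul_le_mul_of_nonneg_right hLγ (mul_nonneg hγ0.le hA)
      nlinarith
    have heq : L / 2 * γ ^ 2 * (σ ^ 2 / n) = γ ^ 2 * L * σ ^ 2 / (2 * n) := by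
      rw [mul_comm 2 (n:ℝ), ← div_div]
      ring
    have hgA : 0 ≤ γ * ‖m‖ ^ 2 := mul_nonneg hγ0.le hA
    linarith [h1, h2, h3, heq, hgA]
  linarith
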